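/- With α_t = (H+1)/(H+t) and α_t^i = α_i ∏_{j=i+1}^t (1 - α_j), for every integer t ≥ 1, max_{1 ≤ i ≤ t} α_t^i ≤ 2H/t and Σ_{i=1}^t (α_t^i)² ≤ 2H/t. -/

import Mathlib

open Real Finset

/-- Learning rate `α_t = (H+1)/(H+t)`. -/
noncomputable def lr (H t : ℕ) : ℝ := (H + 1) / (H + t)

/-- Weight `α_t^i = α_i ∏_{j=i+1}^t (1 - α_j)`. -/
noncomputable def lrWeight (H i t : ℕ) : ℝ :=
  lr H i * ∏ j ∈ Finset.Icc (i + 1) t, (1 - lr H j)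

lemma den_pos (H j : ℕ) (hj : 1 ≤ j) : (0:ℝ) < (H:ℝ) + j := by
  have h1 : (1:ℝ) ≤ (j:ℝ) := by exact_mod_cast hj
  have h2 : (0:ℝ) ≤ (H:ℝ) := Nat.cast_nonneg H
  linarith

lemma lr_nonneg (H j : ℕ) : 0 ≤ lr H j := by
  unfold lr; positivity

lemma lr_le_one (H j : ℕ) (hj : 1 ≤ j) : lr H j ≤ 1 := by
  unfold lr
  rw [div_le_one (den_pos H j hj)]
  have h1 : (1:ℝ) ≤ (j:ℝ) := by exact_mod_cast hj
  linarith

lemma one_sub_lr_nonneg (H j : ℕ) (hj : 1 ≤ j) : 0 ≤ 1 - lr H j := by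
  linarith [lr_le_one H j hj]

lemma weight_nonneg (H i t : ℕ) : 0 ≤ lrWeight H i t := by
  unfold lrWeight
  apply mul_nonneg (lr_nonneg H i)
  apply Finset.prod_nonneg
  intro j hj
  rw [Finset.mem_Icc] at hj
  exact one_sub_lr_nonneg H j (by omega)

lemma lr_step (H t : ℕ) (ht : 1 ≤ t) :
    lr H t * (1 - lr H (t + 1)) ≤ lr H (t + 1) := by
  unfold lr
  have h1 : (0:ℝ) < (H:ℝ) + t := den_pos H t ht
  have h2 : (0:ℝ) < (H:ℝ) + (t + 1 : ℕ) := den_pos H (t+1) (by omega)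
  push_cast at h2 ⊢
  have h3 : (1:ℝ) ≤ (t:ℝ) := by exact_mod_cast ht
  rw [div_mul_eq_mul_div, div_le_div_iff₀ h1 (by linarith)]
  have hs : (1 - ((H:ℝ)+1)/((H:ℝ)+((t:ℝ)+1))) * ((H:ℝ)+((t:ℝ)+1)) = (t:ℝ) := by
    field_simp
    ring
  rw [mul_assoc, hs]
  nlinarith [Nat.cast_nonneg (α := ℝ) H]

lemma weight_succ (H i t : ℕ) (hit : i ≤ t) :
    lrWeight H i (t + 1) = lrWeight H i t * (1 - lr H (t + 1)) := by
  unfold lrWeight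
  rw [Finset.prod_Icc_succ_top (by omega : i + 1 ≤ t + 1), mul_assoc]

lemma weight_self (H i : ℕ) : lrWeight H i i = lr H i := by
  unfold lrWeight
  rw [Finset.Icc_eq_empty (by omega), Finset.prod_empty, mul_one]

lemma weight_le_lr (H i t : ℕ) (hi : 1 ≤ i) (hit : i ≤ t) :
    lrWeight H i t ≤ lr H t := by
  induction t, hit using Nat.le_induction with
  | base => rw [weight_self]
  | succ t hit ih =>
    rw [weight_succ H i t hit]
    calc lrWeight H i t * (1 - lr H (t + 1))
        ≤ lr H t * (1 - lr H (t + 1)) := by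
          apply mul_le_mul_of_nonneg_right ih (one_sub_lr_nonneg H (t+1) (by omega))
      _ ≤ lr H (t + 1) := lr_step H t (le_trans hi hit)

lemma sum_weights (H t : ℕ) (ht : 1 ≤ t) :
    ∑ i ∈ Finset.Icc 1 t, lrWeight H i t = 1 := by
  induction t, ht using Nat.le_induction with
  | base =>
    rw [Finset.Icc_self, Finset.sum_singleton, weight_self]
    unfold lr
    have := den_pos H 1 le_rfl
    push_cast at this ⊢
    field_simp
  | succ t ht ih =>
    rw [Finset.sum_Icc_succ_top (by omega : 1 ≤ t + 1)]
    have hw : ∀ i ∈ Finset.Icc 1 t, lrWeight H i (t+1) = lrWeight H i t * (1 - lr H (t+1)) := by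
      intro i hi
      rw [Finset.mem_Icc] at hi
      exact weight_succ H i t hi.2
    rw [Finset.sum_congr rfl hw, ← Finset.sum_mul, ih, one_mul, weight_self]
    ring

lemma lr_le_bound (H t : ℕ) (hH : 1 ≤ H) (ht : 1 ≤ t) :
    lr H t ≤ 2 * H / t := by
  unfold lr
  have h1 : (0:ℝ) < (H:ℝ) + t := den_pos H t ht
  have h2 : (0:ℝ) < (t:ℝ) := by exact_mod_cast ht
  have h3 : (1:ℝ) ≤ (H:ℝ) := by exact_mod_cast hH
  rw [div_le_div_iff₀ h1 h2]
  nlinarith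

theorem lrWeight_max_and_sq_sum (H : ℕ) (hH : 1 ≤ H) (t : ℕ) (ht : 1 ≤ t) :
    (∀ i ∈ Finset.Icc 1 t, lrWeight H i t ≤ 2 * H / t) ∧
      ∑ i ∈ Finset.Icc 1 t, (lrWeight H i t) ^ 2 ≤ 2 * H / t := by
  have hbound := lr_le_bound H t hH ht
  constructor
  · intro i hi
    rw [Finset.mem_Icc] at hi
    exact le_trans (weight_le_lr H i t hi.1 hi.2) hbound
  · calc ∑ i ∈ Finset.Icc 1 t, (lrWeight H i t) ^ 2
        ≤ ∑ i ∈ Finset.Icc 1 t, lr H t * lrWeight H i t := by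
          apply Finset.sum_le_sum
          intro i hi
          rw [Finset.mem_Icc] at hi
          rw [pow_two]
          exact mul_le_mul_of_nonneg_right (weight_le_lr H i t hi.1 hi.2)
            (weight_nonneg H i t)
      _ = lr H t := by rw [← Finset.mul_sum, sum_weights H t ht, mul_one]
      _ ≤ 2 * H / t := hbound
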